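/- Suppose for every η > 0 a Banach space X contains a bounded sequence (xₙ) such that for every k ∈ ℕ, all signs ε₁,…,ε_k = ±1 and all indices n₁ < ⋯ < n_k one has (1 − η)k ≤ ‖Σᵢ εᵢ x_{nᵢ}‖ ≤ (1 + η)k. Then K^s(X) = 2: for every δ > 0 there is a sequence of vectors in the unit ball of X with ‖xₙ ± x_k‖ ≥ 2 − δ for all n ≠ k, and consequently a sequence of unit vectors with the same separation property. -/

import Mathlib

theorem stmt_19 {X : Type*} [NormedAddCommGroup X] [NormedSpace ℝ X]
    [CompleteSpace X]
    (h : ∀ η : ℝ, 0 < η → ∃ x : ℕ → X, (∃ C : ℝ, ∀ n, ‖x n‖ ≤ C) ∧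
      ∀ (k : ℕ) (εs : ℕ → ℝ) (ns : ℕ → ℕ), StrictMono ns →
        (∀ i, εs i = 1 ∨ εs i = -1) →
        (1 - η) * k ≤ ‖∑ i ∈ Finset.range k, εs i • x (ns i)‖ ∧
        ‖∑ i ∈ Finset.range k, εs i • x (ns i)‖ ≤ (1 + η) * k) :
    ∀ δ : ℝ, 0 < δ →
      (∃ x : ℕ → X, (∀ n, ‖x n‖ ≤ 1) ∧
        ∀ n k : ℕ, n ≠ k → 2 - δ ≤ ‖x n - x k‖ ∧ 2 - δ ≤ ‖x n + x k‖) ∧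
      (∃ x : ℕ → X, (∀ n, ‖x n‖ = 1) ∧
        ∀ n k : ℕ, n ≠ k → 2 - δ ≤ ‖x n - x k‖ ∧ 2 - δ ≤ ‖x n + x k‖) := by
  intro δ hδ
  set η : ℝ := min δ 1 / 8 with hη_def
  have hη : 0 < η := by
    have : 0 < min δ 1 := lt_min hδ one_pos
    positivity
  have hη8 : 8 * η ≤ 1 := by
    have : min δ 1 ≤ 1 := min_le_right _ _
    rw [hη_def]; linarith
  have hηδ : 8 * η ≤ δ := by
    have : min δ 1 ≤ δ := min_le_left _ _
    rw [hη_def]; linarith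
  have h1η : (0:ℝ) < 1 + η := by linarith
  obtain ⟨x, -, hx⟩ := h η hη
  -- norm bounds for each term
  have hnorm : ∀ n, (1-η) ≤ ‖x n‖ ∧ ‖x n‖ ≤ 1+η := by
    intro n
    have hm : StrictMono (fun i => n + i) := fun a b hab => by simpa using hab
    have := hx 1 (fun _ => 1) (fun i => n + i) hm (fun _ => Or.inl rfl)
    simpa using this
  -- pair bounds
  have hpair : ∀ n k : ℕ, n < k → ∀ s : ℝ, s = 1 ∨ s = -1 →
      (1-η)*2 ≤ ‖x n + s • x k‖ := by
    intro n k hnk s hs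
    have hkn : 0 < k - n := by omega
    have hm : StrictMono (fun i => n + i * (k - n)) := by
      intro a b hab
      have : a * (k - n) < b * (k - n) := Nat.mul_lt_mul_of_lt_of_le hab le_rfl hkn
      exact Nat.add_lt_add_left this n
    have := (hx 2 (fun i => if i = 0 then 1 else s) (fun i => n + i * (k - n)) hm
      (fun i => by by_cases hi : i = 0 <;> simp [hi, hs])).1
    have hk2 : n + 1 * (k - n) = k := by omega
    simp only [Finset.sum_range_succ, Finset.sum_range_zero, zero_add] at this
    norm_num at this
    rwa [show n + (k - n) = k from by omega] at this
  have hsep : ∀ n k : ℕ, n ≠ k → (1-η)*2 ≤ ‖x n - x k‖ ∧ (1-η)*2 ≤ ‖x n + x k‖ := by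
    intro n k hnk
    rcases lt_or_gt_of_ne hnk with h' | h'
    · constructor
      · simpa [sub_eq_add_neg] using hpair n k h' (-1) (Or.inr rfl)
      · simpa using hpair n k h' 1 (Or.inl rfl)
    · constructor
      · rw [norm_sub_rev]
        simpa [sub_eq_add_neg] using hpair k n h' (-1) (Or.inr rfl)
      · rw [add_comm]
        simpa using hpair k n h' 1 (Or.inl rfl)
  have hinv : (1+η) * (1+η)⁻¹ = 1 := mul_inv_cancel₀ (ne_of_gt h1η)
  have hinvpos : (0:ℝ) < (1+η)⁻¹ := inv_pos.mpr h1η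
  have hxpos : ∀ n, (0:ℝ) < ‖x n‖ := by
    intro n
    have := (hnorm n).1
    linarith
  constructor
  · -- scaled sequence
    refine ⟨fun n => (1+η)⁻¹ • x n, ?_, ?_⟩
    · intro n
      rw [norm_smul, Real.norm_eq_abs, abs_of_pos hinvpos]
      have := (hnorm n).2
      calc (1+η)⁻¹ * ‖x n‖ ≤ (1+η)⁻¹ * (1+η) := by
            exact mul_le_mul_of_nonneg_left this hinvpos.le
        _ = 1 := by rw [mul_comm]; exact hinv
    · intro n k hnk
      obtain ⟨h1, h2⟩ := hsep n k hnk
      have key : ∀ v : X, (1-η)*2 ≤ ‖v‖ → 2 - δ ≤ ‖(1+η)⁻¹ • v‖ := by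
        intro v hv
        rw [norm_smul, Real.norm_eq_abs, abs_of_pos hinvpos]
        have h3 : (1+η)⁻¹ * ((1-η)*2) ≤ (1+η)⁻¹ * ‖v‖ :=
          mul_le_mul_of_nonneg_left hv hinvpos.le
        have h4 : 2 - δ ≤ (1+η)⁻¹ * ((1-η)*2) := by
          rw [inv_mul_eq_div, le_div_iff₀ h1η]
          nlinarith [mul_pos hδ hη]
        linarith
      constructor
      · have := key (x n - x k) h1
        rwa [smul_sub] at this
      · have := key (x n + x k) h2
        rwa [smul_add] at this
  · -- normalized sequence
    set z : ℕ → X := fun n => ‖x n‖⁻¹ • x n with hz_def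
    set y : ℕ → X := fun n => (1+η)⁻¹ • x n with hy_def
    have hzy : ∀ n, ‖z n - y n‖ ≤ 2*η := by
      intro n
      have ha := (hnorm n).1
      have hb := (hnorm n).2
      have hap := hxpos n
      rw [hz_def, hy_def]
      simp only []
      rw [← sub_smul, norm_smul, Real.norm_eq_abs]
      have hle : (1+η)⁻¹ ≤ ‖x n‖⁻¹ := by
        apply inv_anti₀ hap hb
      rw [abs_of_nonneg (by linarith)]
      have heq : (‖x n‖⁻¹ - (1+η)⁻¹) * ‖x n‖ = 1 - ‖x n‖ * (1+η)⁻¹ := by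
        field_simp
      rw [heq]
      have h5 : (1-η) * (1+η)⁻¹ ≤ ‖x n‖ * (1+η)⁻¹ :=
        mul_le_mul_of_nonneg_right ha hinvpos.le
      nlinarith [mul_pos hinvpos hη]
    have hznorm : ∀ n, ‖z n‖ = 1 := by
      intro n
      rw [hz_def]
      simp only []
      rw [norm_smul, Real.norm_eq_abs, abs_of_pos (inv_pos.mpr (hxpos n))]
      exact inv_mul_cancel₀ (ne_of_gt (hxpos n))
    refine ⟨z, hznorm, ?_⟩
    intro n k hnk
    obtain ⟨h1, h2⟩ := hsep n k hnk
    have hy1 : (1+η)⁻¹ * ((1-η)*2) ≤ ‖y n - y k‖ := by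
      rw [hy_def]; simp only []
      rw [← smul_sub, norm_smul, Real.norm_eq_abs, abs_of_pos hinvpos]
      exact mul_le_mul_of_nonneg_left h1 hinvpos.le
    have hy2 : (1+η)⁻¹ * ((1-η)*2) ≤ ‖y n + y k‖ := by
      rw [hy_def]; simp only []
      rw [← smul_add, norm_smul, Real.norm_eq_abs, abs_of_pos hinvpos]
      exact mul_le_mul_of_nonneg_left h2 hinvpos.le
    have hnum : 2 - δ + 4*η ≤ (1+η)⁻¹ * ((1-η)*2) := by
      rw [inv_mul_eq_div, le_div_iff₀ h1η]
      nlinarith [mul_pos hδ hη, mul_pos hη hη]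
    constructor
    · have tri : ‖y n - y k‖ ≤ ‖z n - z k‖ + ‖z n - y n‖ + ‖z k - y k‖ := by
        calc ‖y n - y k‖ = ‖(z n - z k) - (z n - y n) + (z k - y k)‖ := by
              congr 1; abel
          _ ≤ ‖(z n - z k) - (z n - y n)‖ + ‖z k - y k‖ := norm_add_le _ _
          _ ≤ ‖z n - z k‖ + ‖z n - y n‖ + ‖z k - y k‖ := by
              have := norm_sub_le (z n - z k) (z n - y n)
              linarith
      have := hzy n
      have := hzy k
      linarith
    · have tri : ‖y n + y k‖ ≤ ‖z n + z k‖ + ‖z n - y n‖ + ‖z k - y k‖ := by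
        calc ‖y n + y k‖ = ‖(z n + z k) - (z n - y n) - (z k - y k)‖ := by
              congr 1; abel
          _ ≤ ‖(z n + z k) - (z n - y n)‖ + ‖z k - y k‖ := norm_sub_le _ _
          _ ≤ ‖z n + z k‖ + ‖z n - y n‖ + ‖z k - y k‖ := by
              have := norm_sub_le (z n + z k) (z n - y n)
              linarith
      have := hzy n
      have := hzy k
      linarith
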